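/- For all positive integers d and all v, the number of filters of cardinality v of the poset (M_d^3, A_{3,d}) equals the number of partitions of v into distinct parts, each part at most d+1. -/

import Mathlib

/-- The free abelian monoid `M` on variables `x₁, x₂, …`, identified with
finitely supported exponent vectors; index `i : ℕ` represents the variable `x_{i+1}`. -/
abbrev Mon : Type := ℕ →₀ ℕ

/-- Total degree of a monomial. -/
def deg (m : Mon) : ℕ := m.sum fun _ v => v

/-- `m` is a monomial in the first `n` variables, i.e. `m ∈ Mⁿ`. -/
def InVars (n : ℕ) (m : Mon) : Prop := ∀ i ∈ m.support, i < n

/-- Elementary move: `m = (x_i / x_j) · m'` for some `i < j` with `x_j ∣ m'`. -/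
def ElemMove (m m' : Mon) : Prop :=
  ∃ i j : ℕ, i < j ∧ m + Finsupp.single j 1 = m' + Finsupp.single i 1

/-- Stable move: `m = (x_i / x_s) · m'` where `s = maxsupp m'` and `i < s`. -/
def StableMove (m m' : Mon) : Prop :=
  ∃ s i : ℕ, i < s ∧ m' s ≠ 0 ∧ (∀ t, s < t → m' t = 0) ∧
    m + Finsupp.single s 1 = m' + Finsupp.single i 1

/-- The divisibility relation `D`: `(m, m') ∈ D` iff `m'` divides `m`. -/
def Dvd' (m m' : Mon) : Prop := ∃ t : Mon, m = m' + t

/-- `M_d^3`: monomials in `x₁, x₂, x₃` of total degree `d`. -/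
abbrev Md3 (d : ℕ) : Type := {m : Mon // InVars 3 m ∧ deg m = d}

/-- The number of filters of cardinality `v` of `(M_d^3, A_{3,d})`, where
`A_{3,d}` is the reflexive–transitive closure of elementary moves (which
preserve both degree and the variable range). -/
noncomputable def Ffilt (d v : ℕ) : ℕ :=
  Nat.card {U : Set (Md3 d) //
    (∀ m ∈ U, ∀ m' : Md3 d, Relation.ReflTransGen ElemMove m'.1 m.1 → m' ∈ U) ∧
    U.ncard = v}

/-- The total number of filters of `(M_d^3, A_{3,d})`. -/
noncomputable def fTot (d : ℕ) : ℕ :=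
  Nat.card {U : Set (Md3 d) //
    ∀ m ∈ U, ∀ m' : Md3 d, Relation.ReflTransGen ElemMove m'.1 m.1 → m' ∈ U}


namespace S18


/-- monomial x1^a x2^b x3^c -/
noncomputable def T (a b c : ℕ) : Mon :=
  Finsupp.single 0 a + Finsupp.single 1 b + Finsupp.single 2 c

lemma T_apply (a b c i : ℕ) :
    T a b c i = if i = 0 then a else if i = 1 then b else if i = 2 then c else 0 := by
  simp [T, Finsupp.single_apply]
  split_ifs <;> omega

lemma invars_T (a b c : ℕ) : InVars 3 (T a b c) := by
  intro i hi
  rw [Finsupp.mem_support_iff, T_apply] at hi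
  by_contra h
  simp [show ¬ i = 0 by omega, show ¬ i = 1 by omega, show ¬ i = 2 by omega] at hi

lemma deg_eq (m : Mon) (h : InVars 3 m) : deg m = m 0 + m 1 + m 2 := by
  have hsub : m.support ⊆ Finset.range 3 := fun i hi => Finset.mem_range.mpr (h i hi)
  have := Finsupp.sum_of_support_subset m hsub (fun _ v => v) (by simp)
  rw [deg, this, Finset.sum_range_succ, Finset.sum_range_succ, Finset.sum_range_one]

lemma mon_eq (m : Mon) (h : InVars 3 m) : m = T (m 0) (m 1) (m 2) := by
  ext i
  rw [T_apply]
  rcases i with _ | _ | _ | i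
  · simp
  · simp
  · simp
  · have : m (i + 3) = 0 := by
      by_contra hne
      have := h _ (Finsupp.mem_support_iff.mpr hne)
      omega
    simp [this]

/-- the monomial in `M_d^3` with partial sums `s ≤ t ≤ d`. -/
noncomputable def W (d s t : ℕ) : Mon := T s (t - s) (d - t)

lemma deg_W (d s t : ℕ) (hst : s ≤ t) (htd : t ≤ d) : deg (W d s t) = d := by
  rw [W, deg_eq _ (invars_T _ _ _)]
  rw [T_apply, T_apply, T_apply]; simp; omega

lemma W_mem (d s t : ℕ) (hst : s ≤ t) (htd : t ≤ d) : InVars 3 (W d s t) ∧ deg (W d s t) = d :=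
  ⟨invars_T _ _ _, deg_W d s t hst htd⟩

lemma elemMove_s (d s t : ℕ) (hst : s < t) (htd : t ≤ d) :
    ElemMove (W d (s+1) t) (W d s t) := by
  refine ⟨0, 1, by omega, ?_⟩
  ext i
  simp only [Finsupp.add_apply, W, T_apply, Finsupp.single_apply]
  split_ifs <;> omega

lemma elemMove_t (d s t : ℕ) (hst : s ≤ t) (htd : t < d) :
    ElemMove (W d s (t+1)) (W d s t) := by
  refine ⟨1, 2, by omega, ?_⟩
  ext i
  simp only [Finsupp.add_apply, W, T_apply, Finsupp.single_apply]
  split_ifs <;> omega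

lemma chain_s (d : ℕ) : ∀ n s t, s + n ≤ t → t ≤ d →
    Relation.ReflTransGen ElemMove (W d (s+n) t) (W d s t) := by
  intro n
  induction n with
  | zero => intro s t _ _; exact Relation.ReflTransGen.refl
  | succ n ih =>
    intro s t h htd
    have ih' := ih s t (by omega) htd
    have step : ElemMove (W d (s + (n+1)) t) (W d (s+n) t) := by
      have := elemMove_s d (s+n) t (by omega) htd
      rwa [show s + n + 1 = s + (n+1) by omega] at this
    exact Relation.ReflTransGen.head step ih'

lemma chain_t (d : ℕ) : ∀ n s t, s ≤ t → t + n ≤ d →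
    Relation.ReflTransGen ElemMove (W d s (t+n)) (W d s t) := by
  intro n
  induction n with
  | zero => intro s t _ _; exact Relation.ReflTransGen.refl
  | succ n ih =>
    intro s t hst h
    have ih' := ih s t hst (by omega)
    have step : ElemMove (W d s (t + (n+1))) (W d s (t+n)) := by
      have := elemMove_t d s (t+n) (by omega) (by omega)
      rwa [show t + n + 1 = t + (n+1) by omega] at this
    exact Relation.ReflTransGen.head step ih'

lemma chain (d s t s' t' : ℕ) (h1 : s ≤ s') (h2 : t ≤ t') (h3 : s' ≤ t') (h4 : t' ≤ d)
    (h5 : s ≤ t) : Relation.ReflTransGen ElemMove (W d s' t') (W d s t) := by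
  have c1 : Relation.ReflTransGen ElemMove (W d s' t') (W d s t') := by
    have := chain_s d (s' - s) s t' (by omega) h4
    rwa [show s + (s' - s) = s' by omega] at this
  have c2 : Relation.ReflTransGen ElemMove (W d s t') (W d s t) := by
    have := chain_t d (t' - t) s t h5 (by omega)
    rwa [show t + (t' - t) = t' by omega] at this
  exact c1.trans c2

lemma elem_p (x y : Mon) (h : ElemMove x y) :
    y 0 ≤ x 0 ∧ y 0 + y 1 ≤ x 0 + x 1 := by
  obtain ⟨i, j, hij, heq⟩ := h
  have h0 := DFunLike.congr_fun heq 0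
  have h1 := DFunLike.congr_fun heq 1
  simp only [Finsupp.add_apply, Finsupp.single_apply] at h0 h1
  split_ifs at h0 h1 <;> omega

lemma rtg_p (a b : Mon) (h : Relation.ReflTransGen ElemMove a b) :
    b 0 ≤ a 0 ∧ b 0 + b 1 ≤ a 0 + a 1 := by
  induction h with
  | refl => omega
  | tail _ h2 ih =>
    have := elem_p _ _ h2
    omega

lemma md3_eq_W {d : ℕ} (m : Md3 d) : m.1 = W d (m.1 0) (m.1 0 + m.1 1) := by
  have hd := m.2.2
  rw [deg_eq _ m.2.1] at hd
  have := mon_eq m.1 m.2.1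
  rw [W, show m.1 0 + m.1 1 - m.1 0 = m.1 1 by omega, show d - (m.1 0 + m.1 1) = m.1 2 by omega]
  exact this

lemma p2_le {d : ℕ} (m : Md3 d) : m.1 0 + m.1 1 ≤ d := by
  have hd := m.2.2
  rw [deg_eq _ m.2.1] at hd
  omega

lemma order_iff {d : ℕ} (m m' : Md3 d) :
    Relation.ReflTransGen ElemMove m'.1 m.1 ↔
      (m.1 0 ≤ m'.1 0 ∧ m.1 0 + m.1 1 ≤ m'.1 0 + m'.1 1) := by
  constructor
  · exact rtg_p m'.1 m.1
  · rintro ⟨h1, h2⟩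
    rw [md3_eq_W m, md3_eq_W m']
    exact chain d _ _ _ _ h1 h2 (by omega) (p2_le m') (by omega)



/-- The staircase poset `{(s,t) : s ≤ t ≤ d}`. -/
def Stair (d : ℕ) : Type := {p : ℕ × ℕ // p.1 ≤ p.2 ∧ p.2 ≤ d}

instance {d : ℕ} : Finite (Stair d) :=
  Finite.of_injective
    (fun p : Stair d =>
      ((⟨p.1.1, by obtain ⟨h1, h2⟩ := p.2; omega⟩ : Fin (d+1)),
       (⟨p.1.2, by obtain ⟨h1, h2⟩ := p.2; omega⟩ : Fin (d+1))))
    (by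
      intro p q h
      simp only [Prod.mk.injEq, Fin.mk.injEq] at h
      exact Subtype.ext (Prod.ext h.1 h.2))

variable {d : ℕ} {U : Set (Stair d)}

def Up (U : Set (Stair d)) : Prop :=
  ∀ p ∈ U, ∀ q : Stair d, p.1.1 ≤ q.1.1 → p.1.2 ≤ q.1.2 → q ∈ U

def mem' (U : Set (Stair d)) (s t : ℕ) : Prop :=
  ∃ h : s ≤ t ∧ t ≤ d, (⟨(s,t), h⟩ : Stair d) ∈ U

lemma mem_iff_mem' (U : Set (Stair d)) (p : Stair d) : p ∈ U ↔ mem' U p.1.1 p.1.2 := by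
  constructor
  · intro hp
    exact ⟨p.2, hp⟩
  · rintro ⟨h, hm⟩
    exact hm

noncomputable def rowF (U : Set (Stair d)) (t : ℕ) : Finset ℕ :=
  Set.Finite.toFinset (s := {s | s < t + 1 ∧ mem' U s t})
    (Set.Finite.subset (Set.finite_Iio (t+1)) (fun x hx => hx.1))

lemma mem_rowF {s t : ℕ} : s ∈ rowF U t ↔ s < t + 1 ∧ mem' U s t := by
  rw [rowF, Set.Finite.mem_toFinset]
  rfl

lemma rowF_subset (U : Set (Stair d)) (t : ℕ) : rowF U t ⊆ Finset.range (t+1) := by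
  intro x hx
  exact Finset.mem_range.mpr (mem_rowF.mp hx).1

noncomputable def r (U : Set (Stair d)) (t : ℕ) : ℕ := (rowF U t).card

lemma r_le (U : Set (Stair d)) (t : ℕ) : r U t ≤ t + 1 := by
  have := Finset.card_le_card (rowF_subset U t)
  simpa [r] using this

lemma r_top_zero (U : Set (Stair d)) (t : ℕ) (ht : d < t) : r U t = 0 := by
  rw [r, Finset.card_eq_zero, Finset.eq_empty_iff_forall_notMem]
  intro s hs
  obtain ⟨-, ⟨h, -⟩⟩ := mem_rowF.mp hs
  omega

/-- A finset upward-closed within `[0,t]` is a top interval. -/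
lemma upclosed_eq_Ico {A : Finset ℕ} {t : ℕ} (hA : A ⊆ Finset.range (t+1))
    (hup : ∀ s ∈ A, ∀ s', s ≤ s' → s' ≤ t → s' ∈ A) :
    A = Finset.Ico (t+1 - A.card) (t+1) := by
  have hcard : A.card ≤ t + 1 := by
    have := Finset.card_le_card hA
    simpa using this
  have hsub : Finset.Ico (t+1 - A.card) (t+1) ⊆ A := by
    intro n hn
    rw [Finset.mem_Ico] at hn
    by_contra hnA
    have hAsub : A ⊆ Finset.Ico (n+1) (t+1) := by
      intro a ha
      rw [Finset.mem_Ico]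
      have hat : a < t + 1 := by simpa using hA ha
      refine ⟨?_, hat⟩
      by_contra hle
      exact hnA (hup a ha n (by omega) (by omega))
    have := Finset.card_le_card hAsub
    rw [Nat.card_Ico] at this
    omega
  exact (Finset.eq_of_subset_of_card_le hsub (by rw [Nat.card_Ico]; omega)).symm

lemma rowF_eq (hU : Up U) (t : ℕ) : rowF U t = Finset.Ico (t+1 - r U t) (t+1) := by
  refine upclosed_eq_Ico (rowF_subset U t) ?_
  intro s hs s' hss' hs't
  obtain ⟨-, h, hm⟩ := mem_rowF.mp hs
  refine mem_rowF.mpr ⟨by omega, ⟨⟨hs't, h.2⟩, ?_⟩⟩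
  exact hU _ hm ⟨(s', t), ⟨hs't, h.2⟩⟩ hss' le_rfl

lemma mem'_iff (hU : Up U) (s t : ℕ) :
    mem' U s t ↔ t + 1 ≤ s + r U t ∧ s ≤ t := by
  have h1 : mem' U s t ↔ s ∈ rowF U t := by
    constructor
    · intro hm
      exact mem_rowF.mpr ⟨by obtain ⟨h, -⟩ := hm; omega, hm⟩
    · intro hs
      exact (mem_rowF.mp hs).2
  rw [h1, rowF_eq hU, Finset.mem_Ico]
  have := r_le U t
  omega

lemma r_step (hU : Up U) {t : ℕ} (ht : t < d) (h0 : r U t ≠ 0) :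
    r U t + 1 ≤ r U (t+1) := by
  have hle := r_le U t
  have hle' := r_le U (t+1)
  set s := t + 1 - r U t with hs
  have hm : mem' U s t := by
    rw [mem'_iff hU]
    omega
  obtain ⟨h, hmem⟩ := hm
  have hq : (⟨(s, t+1), ⟨by omega, by omega⟩⟩ : Stair d) ∈ U :=
    hU _ hmem _ le_rfl (Nat.le_succ t)
  have hm' : mem' U s (t+1) := ⟨_, hq⟩
  rw [mem'_iff hU] at hm'
  omega

lemma r_mono (hU : Up U) : ∀ n t, t + n ≤ d → r U t ≠ 0 → r U t + n ≤ r U (t+n) := by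
  intro n
  induction n with
  | zero => intro t _ _; simp
  | succ n ih =>
    intro t h h0
    have h1 := ih t (by omega) h0
    have h2 := r_step hU (t := t + n) (by omega) (by omega)
    rw [show t + (n+1) = t + n + 1 by omega]
    omega

noncomputable def suffF (U : Set (Stair d)) : Finset ℕ :=
  Finset.filter (fun t => r U t ≠ 0) (Finset.range (d+1))

lemma mem_suffF {t : ℕ} : t ∈ suffF U ↔ t < d + 1 ∧ r U t ≠ 0 := by
  rw [suffF, Finset.mem_filter, Finset.mem_range]

lemma suffF_subset (U : Set (Stair d)) : suffF U ⊆ Finset.range (d+1) := by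
  intro x hx
  exact Finset.mem_range.mpr (mem_suffF.mp hx).1

lemma suffF_eq (hU : Up U) : suffF U = Finset.Ico (d+1 - (suffF U).card) (d+1) := by
  refine upclosed_eq_Ico (suffF_subset U) ?_
  intro t ht t' htt' ht'd
  obtain ⟨-, h0⟩ := mem_suffF.mp ht
  refine mem_suffF.mpr ⟨by omega, ?_⟩
  have := r_mono hU (t' - t) t (by omega) h0
  rw [show t + (t' - t) = t' by omega] at this
  omega

lemma r_lt_r (hU : Up U) {t t' : ℕ} (ht : t ∈ suffF U) (ht' : t' ∈ suffF U) (h : t < t') :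
    r U t < r U t' := by
  rw [mem_suffF] at ht ht'
  have := r_mono hU (t' - t) t (by omega) ht.2
  rw [show t + (t' - t) = t' by omega] at this
  omega

lemma r_injOn (hU : Up U) : Set.InjOn (r U) ↑(suffF U) := by
  intro a ha b hb hab
  by_contra hne
  rcases Nat.lt_or_ge a b with h | h
  · exact absurd hab (Nat.ne_of_lt (r_lt_r hU (by simpa using ha) (by simpa using hb) h))
  · have hlt : b < a := by omega
    exact absurd hab.symm (Nat.ne_of_lt (r_lt_r hU (by simpa using hb) (by simpa using ha) hlt))

noncomputable def phi (U : Set (Stair d)) : Finset ℕ := (suffF U).image (r U)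

lemma ncard_eq_sum_r (U : Set (Stair d)) :
    U.ncard = ∑ t ∈ Finset.range (d+1), r U t := by
  classical
  have hfin : U.Finite := Set.toFinite U
  rw [Set.ncard_eq_toFinset_card _ hfin]
  rw [Finset.card_eq_sum_card_fiberwise (f := fun p : Stair d => p.1.2)
    (t := Finset.range (d+1)) (fun p hp => Finset.mem_range.mpr (by show p.1.2 < d + 1; obtain ⟨h1, h2⟩ := p.2; omega))]
  refine Finset.sum_congr rfl ?_
  intro t _
  rw [r]
  apply Finset.card_bij (fun p _ => p.1.1)
  · intro p hp
    rw [Finset.mem_filter, Set.Finite.mem_toFinset] at hp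
    obtain ⟨hpU, hpt⟩ := hp
    have hpt' : p.1.2 = t := hpt
    refine mem_rowF.mpr ⟨by obtain ⟨h1, h2⟩ := p.2; omega, ?_⟩
    rw [← hpt']
    exact (mem_iff_mem' U p).mp hpU
  · intro p hp q hq h
    rw [Finset.mem_filter] at hp hq
    have hp2 : p.1.2 = t := hp.2
    have hq2 : q.1.2 = t := hq.2
    exact Subtype.ext (Prod.ext h (hp2.trans hq2.symm))
  · intro s hs
    obtain ⟨-, ⟨h, hm⟩⟩ := mem_rowF.mp hs
    refine ⟨⟨(s, t), h⟩, ?_, rfl⟩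
    exact Finset.mem_filter.mpr ⟨hfin.mem_toFinset.mpr hm, rfl⟩

lemma sum_phi (hU : Up U) : ∑ p ∈ phi U, p = U.ncard := by
  rw [phi, Finset.sum_image (fun a ha b hb => r_injOn hU ha hb), ncard_eq_sum_r]
  rw [suffF, Finset.sum_filter_ne_zero]

lemma phi_mem {p : ℕ} (hp : p ∈ phi U) : 1 ≤ p ∧ p ≤ d + 1 := by
  rw [phi, Finset.mem_image] at hp
  obtain ⟨t, ht, rfl⟩ := hp
  rw [mem_suffF] at ht
  have := r_le U t
  exact ⟨by omega, by omega⟩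

lemma mono_image_eq (A : Finset ℕ) :
    ∀ (f g : ℕ → ℕ),
    (∀ a ∈ A, ∀ b ∈ A, a < b → f a < f b) →
    (∀ a ∈ A, ∀ b ∈ A, a < b → g a < g b) →
    A.image f = A.image g → ∀ a ∈ A, f a = g a := by
  classical
  induction A using Finset.induction_on_max with
  | empty => simp
  | insert a s hmax ih =>
    intro f g hf hg him
    have hfa_mem : f a ∈ (insert a s).image g := by
      rw [← him]
      exact Finset.mem_image_of_mem f (Finset.mem_insert_self a s)
    have hga_mem : g a ∈ (insert a s).image f := by
      rw [him]
      exact Finset.mem_image_of_mem g (Finset.mem_insert_self a s)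
    obtain ⟨x, hx, hgx⟩ := Finset.mem_image.mp hfa_mem
    obtain ⟨y, hy, hfy⟩ := Finset.mem_image.mp hga_mem
    have hfa : f a = g a := by
      rcases Finset.mem_insert.mp hx with rfl | hxs
      · exact hgx.symm
      · have h1 : g x < g a :=
          hg x (Finset.mem_insert_of_mem hxs) a (Finset.mem_insert_self a s) (hmax x hxs)
        have h2 : f y ≤ f a := by
          rcases Finset.mem_insert.mp hy with rfl | hys
          · exact le_rfl
          · exact le_of_lt
              (hf y (Finset.mem_insert_of_mem hys) a (Finset.mem_insert_self a s) (hmax y hys))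
        omega
    have hnotf : f a ∉ s.image f := by
      rw [Finset.mem_image]
      rintro ⟨z, hzs, hfz⟩
      exact absurd hfz
        (Nat.ne_of_lt (hf z (Finset.mem_insert_of_mem hzs) a (Finset.mem_insert_self a s)
          (hmax z hzs)))
    have hnotg : g a ∉ s.image g := by
      rw [Finset.mem_image]
      rintro ⟨z, hzs, hgz⟩
      exact absurd hgz
        (Nat.ne_of_lt (hg z (Finset.mem_insert_of_mem hzs) a (Finset.mem_insert_self a s)
          (hmax z hzs)))
    have him' : s.image f = s.image g := by
      have h1 : (insert a s).image f = insert (f a) (s.image f) := Finset.image_insert f a s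
      have h2 : (insert a s).image g = insert (g a) (s.image g) := Finset.image_insert g a s
      have h3 := him
      rw [h1, h2, hfa] at h3
      have h4 := congrArg (fun B => Finset.erase B (g a)) h3
      rwa [Finset.erase_insert (by rwa [← hfa]), Finset.erase_insert hnotg] at h4
    intro b hb
    rcases Finset.mem_insert.mp hb with rfl | hbs
    · exact hfa
    · exact ih f g
        (fun a₁ ha₁ b₁ hb₁ => hf a₁ (Finset.mem_insert_of_mem ha₁) b₁ (Finset.mem_insert_of_mem hb₁))
        (fun a₁ ha₁ b₁ hb₁ => hg a₁ (Finset.mem_insert_of_mem ha₁) b₁ (Finset.mem_insert_of_mem hb₁))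
        him' b hbs

lemma phi_card (hU : Up U) : (phi U).card = (suffF U).card :=
  Finset.card_image_of_injOn (r_injOn hU)

lemma phi_inj {U U' : Set (Stair d)} (hU : Up U) (hU' : Up U') (h : phi U = phi U') :
    U = U' := by
  have hcard : (suffF U).card = (suffF U').card := by
    rw [← phi_card hU, ← phi_card hU', h]
  have hsuff : suffF U = suffF U' := by
    rw [suffF_eq hU, suffF_eq hU', hcard]
  have hr : ∀ t, r U t = r U' t := by
    intro t
    by_cases htd : t ≤ d
    · by_cases hts : t ∈ suffF U
      · refine mono_image_eq (suffF U) (r U) (r U')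
          (fun a ha b hb hab => r_lt_r hU ha hb hab)
          (fun a ha b hb hab => r_lt_r hU' (hsuff ▸ ha) (hsuff ▸ hb) hab)
          ?_ t hts
        have : phi U' = (suffF U).image (r U') := by rw [phi, hsuff]
        rw [← this, ← h, phi]
      · have h1 : r U t = 0 := by
          by_contra h0
          exact hts (mem_suffF.mpr ⟨by omega, h0⟩)
        have h2 : r U' t = 0 := by
          by_contra h0
          exact hts (hsuff ▸ mem_suffF.mpr ⟨by omega, h0⟩)
        rw [h1, h2]
    · rw [r_top_zero U t (by omega), r_top_zero U' t (by omega)]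
  apply Set.ext
  intro p
  rw [mem_iff_mem' U p, mem_iff_mem' U' p, mem'_iff hU, mem'_iff hU', hr]

lemma plemma (S : Finset ℕ) :
    ∀ (n : ℕ) (i j : Fin S.card), (j : ℕ) = (i : ℕ) + n →
      S.orderEmbOfFin rfl i + n ≤ S.orderEmbOfFin rfl j := by
  intro n
  induction n with
  | zero =>
    intro i j h
    have : j = i := Fin.ext (by omega)
    rw [this]
    omega
  | succ n ih =>
    intro i j h
    have hj' : (i : ℕ) + n < S.card := by have := j.isLt; omega
    have h1 := ih i ⟨(i : ℕ) + n, hj'⟩ rfl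
    have h2 : S.orderEmbOfFin rfl ⟨(i : ℕ) + n, hj'⟩ < S.orderEmbOfFin rfl j :=
      (S.orderEmbOfFin rfl).strictMono (by rw [Fin.lt_def]; simp; omega)
    omega

/-- the prescribed row sizes for the upset built from `S`. -/
noncomputable def rS (d : ℕ) (S : Finset ℕ) : ℕ → ℕ := fun t =>
  if h : d < t + S.card ∧ t ≤ d then
    S.orderEmbOfFin rfl ⟨t + S.card - (d+1), by omega⟩ else 0

lemma rS_eq_zero {d : ℕ} {S : Finset ℕ} {t : ℕ} (h : ¬(d < t + S.card ∧ t ≤ d)) :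
    rS d S t = 0 := dif_neg h

lemma rS_eq {d : ℕ} {S : Finset ℕ} {t : ℕ} (h : d < t + S.card ∧ t ≤ d) :
    rS d S t = S.orderEmbOfFin rfl ⟨t + S.card - (d+1), by omega⟩ := dif_pos h

lemma rS_pos {d : ℕ} {S : Finset ℕ} (hS : ∀ p ∈ S, 1 ≤ p ∧ p ≤ d + 1) {t : ℕ}
    (h : d < t + S.card ∧ t ≤ d) : 1 ≤ rS d S t := by
  rw [rS_eq h]
  exact (hS _ (S.orderEmbOfFin_mem rfl _)).1

lemma rS_le {d : ℕ} {S : Finset ℕ} (hS : ∀ p ∈ S, 1 ≤ p ∧ p ≤ d + 1) (t : ℕ) :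
    rS d S t ≤ t + 1 := by
  by_cases h : d < t + S.card ∧ t ≤ d
  · rw [rS_eq h]
    have hk1 : 0 < S.card := by omega
    have hlast : (⟨S.card - 1, by omega⟩ : Fin S.card) = ⟨S.card - 1, by omega⟩ := rfl
    have h1 := plemma S (S.card - 1 - (t + S.card - (d+1)))
      ⟨t + S.card - (d+1), by omega⟩ ⟨S.card - 1, by omega⟩ (by simp; omega)
    have h2 := (hS _ (S.orderEmbOfFin_mem rfl (⟨S.card - 1, by omega⟩ : Fin S.card))).2
    omega
  · rw [rS_eq_zero h]; omega

lemma rS_mono {d : ℕ} {S : Finset ℕ} {t t' : ℕ} (h : d < t + S.card ∧ t ≤ d)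
    (htt' : t ≤ t') (ht'd : t' ≤ d) : rS d S t + (t' - t) ≤ rS d S t' := by
  have h' : d < t' + S.card ∧ t' ≤ d := ⟨by omega, ht'd⟩
  rw [rS_eq h, rS_eq h']
  exact plemma S (t' - t) _ _ (by simp; omega)

/-- the upset with row sizes `rS d S`. -/
def US (d : ℕ) (S : Finset ℕ) : Set (Stair d) :=
  {q | q.1.2 + 1 ≤ q.1.1 + rS d S q.1.2}

lemma US_up (d : ℕ) (S : Finset ℕ) : Up (US d S) := by
  rintro q hq q' h1 h2
  obtain ⟨hq1, hq2⟩ := q.2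
  obtain ⟨hq1', hq2'⟩ := q'.2
  have hm : q.1.2 + 1 ≤ q.1.1 + rS d S q.1.2 := hq
  have hpos : 1 ≤ rS d S q.1.2 := by
    by_contra h0
    have : rS d S q.1.2 = 0 := by omega
    rw [this] at hm
    omega
  have hsuf : d < q.1.2 + S.card ∧ q.1.2 ≤ d := by
    by_contra h0
    rw [rS_eq_zero h0] at hpos
    omega
  have hmono := rS_mono hsuf h2 hq2'
  show q'.1.2 + 1 ≤ q'.1.1 + rS d S q'.1.2
  omega

lemma mem'_US {d : ℕ} {S : Finset ℕ} {s t : ℕ} :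
    mem' (US d S) s t ↔ (s ≤ t ∧ t ≤ d) ∧ t + 1 ≤ s + rS d S t := by
  constructor
  · rintro ⟨h, hm⟩
    exact ⟨h, hm⟩
  · rintro ⟨h, hm⟩
    exact ⟨h, hm⟩

lemma US_r {d : ℕ} {S : Finset ℕ} (hS : ∀ p ∈ S, 1 ≤ p ∧ p ≤ d + 1) {t : ℕ} (htd : t ≤ d) :
    r (US d S) t = rS d S t := by
  have hle := rS_le hS t
  have hrow : rowF (US d S) t = Finset.Ico (t + 1 - rS d S t) (t+1) := by
    ext s
    rw [mem_rowF, mem'_US, Finset.mem_Ico]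
    omega
  rw [r, hrow, Nat.card_Ico]
  omega

lemma US_suffF {d : ℕ} {S : Finset ℕ} (hS : ∀ p ∈ S, 1 ≤ p ∧ p ≤ d + 1) :
    suffF (US d S) = Finset.Ico (d + 1 - S.card) (d+1) := by
  ext t
  rw [mem_suffF, Finset.mem_Ico]
  constructor
  · rintro ⟨ht, hr⟩
    have := US_r hS (t := t) (by omega)
    rw [this] at hr
    have : d < t + S.card ∧ t ≤ d := by
      by_contra h0
      exact hr (rS_eq_zero h0)
    omega
  · rintro ⟨h1, h2⟩
    have hsuf : d < t + S.card ∧ t ≤ d := ⟨by omega, by omega⟩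
    refine ⟨by omega, ?_⟩
    rw [US_r hS (by omega)]
    have := rS_pos hS hsuf
    omega

lemma US_phi {d : ℕ} {S : Finset ℕ} (hS : ∀ p ∈ S, 1 ≤ p ∧ p ≤ d + 1) :
    phi (US d S) = S := by
  have hk : S.card ≤ d + 1 := by
    have hsub : S ⊆ Finset.Icc 1 (d+1) := fun x hx => Finset.mem_Icc.mpr (hS x hx)
    have := Finset.card_le_card hsub
    rwa [Nat.card_Icc, show d + 1 + 1 - 1 = d + 1 by omega] at this
  rw [phi, US_suffF hS]
  ext x
  rw [Finset.mem_image]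
  constructor
  · rintro ⟨t, ht, rfl⟩
    rw [Finset.mem_Ico] at ht
    rw [US_r hS (by omega), rS_eq ⟨by omega, by omega⟩]
    exact S.orderEmbOfFin_mem rfl _
  · intro hx
    have hrange : x ∈ Set.range (S.orderEmbOfFin rfl) := by
      rw [Finset.range_orderEmbOfFin]
      exact hx
    obtain ⟨i, hi⟩ := hrange
    refine ⟨d + 1 - S.card + (i : ℕ), Finset.mem_Ico.mpr ⟨by omega, by have := i.isLt; omega⟩, ?_⟩
    have hiv := i.isLt
    rw [US_r hS (by omega), rS_eq ⟨by omega, by omega⟩]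
    rw [← hi]
    congr 1
    exact Fin.ext (by simp; omega)

theorem stair_count (d v : ℕ) :
    Nat.card {U : Set (Stair d) // Up U ∧ U.ncard = v} =
      Nat.card {S : Finset ℕ // (∀ p ∈ S, 1 ≤ p ∧ p ≤ d + 1) ∧ ∑ p ∈ S, p = v} := by
  apply Nat.card_eq_of_bijective
    (fun U => (⟨phi U.1, fun p hp => phi_mem hp, by rw [sum_phi U.2.1, U.2.2]⟩ :
      {S : Finset ℕ // (∀ p ∈ S, 1 ≤ p ∧ p ≤ d + 1) ∧ ∑ p ∈ S, p = v}))
  constructor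
  · rintro ⟨U, hU⟩ ⟨U', hU'⟩ h
    rw [Subtype.mk.injEq] at h ⊢
    exact phi_inj hU.1 hU'.1 h
  · rintro ⟨S, hS, hsum⟩
    refine ⟨⟨US d S, US_up d S, ?_⟩, ?_⟩
    · rw [← sum_phi (US_up d S), US_phi hS, hsum]
    · exact Subtype.ext (US_phi hS)


noncomputable def E (d : ℕ) : Md3 d ≃ Stair d where
  toFun m := ⟨(m.1 0, m.1 0 + m.1 1), ⟨Nat.le_add_right _ _, p2_le m⟩⟩
  invFun q := ⟨W d q.1.1 q.1.2, W_mem d _ _ q.2.1 q.2.2⟩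
  left_inv m := Subtype.ext (md3_eq_W m).symm
  right_inv q := by
    obtain ⟨h1, h2⟩ := q.2
    apply Subtype.ext
    have w0 : W d q.1.1 q.1.2 0 = q.1.1 := by simp [W, T_apply]
    have w1 : W d q.1.1 q.1.2 1 = q.1.2 - q.1.1 := by simp [W, T_apply]
    show (W d q.1.1 q.1.2 0, W d q.1.1 q.1.2 0 + W d q.1.1 q.1.2 1) = q.1
    rw [w0, w1, show q.1.1 + (q.1.2 - q.1.1) = q.1.2 by omega]

lemma mem_congr {d : ℕ} (U : Set (Md3 d)) (q : Stair d) :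
    q ∈ Equiv.Set.congr (E d) U ↔ (E d).symm q ∈ U := by
  simp [Equiv.Set.congr]

lemma E_fst {d : ℕ} (m : Md3 d) : ((E d) m).1.1 = m.1 0 := rfl

lemma E_snd {d : ℕ} (m : Md3 d) : ((E d) m).1.2 = m.1 0 + m.1 1 := rfl

lemma filt_transfer (d v : ℕ) :
    Ffilt d v = Nat.card {U : Set (Stair d) // Up U ∧ U.ncard = v} := by
  rw [Ffilt]
  apply Nat.card_congr
  refine Equiv.subtypeEquiv (Equiv.Set.congr (E d)) ?_
  intro U
  have hncard : (Equiv.Set.congr (E d) U : Set (Stair d)).ncard = U.ncard := by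
    simp only [Equiv.Set.congr, Equiv.coe_fn_mk]
    exact Set.ncard_image_of_injective U (E d).injective
  constructor
  · rintro ⟨H, hv⟩
    refine ⟨?_, by rw [hncard, hv]⟩
    intro p hp q h1 h2
    obtain ⟨m, hm, rfl⟩ := hp
    set m' := (E d).symm q with hm'
    have hq : (E d) m' = q := Equiv.apply_symm_apply (E d) q
    have hrtg : Relation.ReflTransGen ElemMove m'.1 m.1 := by
      rw [order_iff]
      have c1 : m'.1 0 = q.1.1 := by rw [← hq]; rfl
      have c2 : m'.1 0 + m'.1 1 = q.1.2 := by rw [← hq]; rfl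
      have d1 : m.1 0 = ((E d) m).1.1 := rfl
      have d2 : m.1 0 + m.1 1 = ((E d) m).1.2 := rfl
      omega
    have := H m hm m' hrtg
    rw [← hq]
    exact Set.mem_image_of_mem _ this
  · rintro ⟨H, hv⟩
    refine ⟨?_, by rw [← hncard, hv]⟩
    intro m hm m' hrtg
    rw [order_iff] at hrtg
    have h1 : ((E d) m).1.1 ≤ ((E d) m').1.1 := hrtg.1
    have h2 : ((E d) m).1.2 ≤ ((E d) m').1.2 := hrtg.2
    have := H ((E d) m) (Set.mem_image_of_mem _ hm) ((E d) m') h1 h2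
    obtain ⟨x, hx, hex⟩ := this
    rwa [← (E d).injective hex]

end S18

/-- For every positive integer `d` and every `v`, the number of
filters of cardinality `v` of `(M_d^3, A_{3,d})` equals the number of partitions
of `v` into distinct parts each at most `d+1` (finite sets of pairwise distinct
positive integers `≤ d+1` summing to `v`). -/
theorem stmt18 (d : ℕ) (hd : 0 < d) (v : ℕ) :
    Ffilt d v =
      Nat.card {S : Finset ℕ // (∀ p ∈ S, 1 ≤ p ∧ p ≤ d + 1) ∧ ∑ p ∈ S, p = v} := by
  rw [S18.filt_transfer, S18.stair_count]
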